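/- Let k ≥ 2 and v ∈ {0,1}^k with 0 < wt_H(v) < k, and suppose v has VT syndrome a modulo 2k. Then the vector u' = 0 v₁ v₂ … v_{k−1} (prepend 0, drop last bit) satisfies: u' ∈ VT_a(2k;k) implies v = 0^k, a contradiction; hence u' ∉ VT_a(2k;k). -/

import Mathlib

/-- VT syndrome (as an integer sum) of a binary list. -/
def vtSynZ (l : List Bool) : ℤ :=
  ∑ i : Fin l.length, (((i : ℕ) + 1 : ℕ) : ℤ) * (if l.get i then 1 else 0)

lemma count_sum (l : List Bool) :
    (∑ i : Fin l.length, (if l.get i then (1:ℤ) else 0)) = l.count true := by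
  induction l with
  | nil => simp
  | cons b t ih =>
    show (∑ i : Fin (t.length + 1), if (b :: t).get i = true then (1:ℤ) else 0) = _
    rw [Fin.sum_univ_succ]
    simp only [List.get, List.get_cons_succ', List.get_cons_zero] at *
    rw [ih]
    cases b <;> simp [List.count_cons] <;> ring

lemma vtSynZ_cons (b : Bool) (l : List Bool) :
    vtSynZ (b :: l) = (if b then 1 else 0) + vtSynZ l + l.count true := by
  unfold vtSynZ
  show (∑ i : Fin (l.length + 1), (((i:ℕ)+1:ℕ):ℤ) * (if (b :: l).get i = true then 1 else 0)) = _
  rw [Fin.sum_univ_succ]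
  simp only [List.get, List.get_cons_succ', List.get_cons_zero, Fin.val_succ, Fin.eta]
  have : ∀ i : Fin l.length,
      ((((i : ℕ) + 1 + 1 : ℕ) : ℤ)) * (if l.get i then 1 else 0)
        = (((i : ℕ) + 1 : ℕ) : ℤ) * (if l.get i then 1 else 0)
          + (if l.get i then 1 else 0) := by
    intro i
    cases h : l.get i <;> simp <;> push_cast <;> ring
  rw [Finset.sum_congr rfl fun i _ => this i, Finset.sum_add_distrib, count_sum]
  push_cast [Fin.val_zero]
  cases b <;> simp <;> ring

lemma vtSynZ_concat (l : List Bool) (b : Bool) :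
    vtSynZ (l ++ [b]) = vtSynZ l + ((l.length : ℤ) + 1) * (if b then 1 else 0) := by
  induction l with
  | nil => simp [vtSynZ_cons, vtSynZ]
  | cons c t ih =>
    rw [List.cons_append, vtSynZ_cons, ih, vtSynZ_cons]
    have : ((t ++ [b]).count true : ℤ) = t.count true + (if b then 1 else 0) := by
      cases b <;> simp
    rw [this]
    simp only [List.length_cons]
    push_cast
    ring

theorem stmt10 (k : ℕ) (hk : 2 ≤ k) (v : List Bool) (hlen : v.length = k) (a : ℤ)
    (hw : 0 < v.count true) (hw' : v.count true < k)
    (hv : vtSynZ v ≡ a [ZMOD (2 * k : ℕ)])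
    (u' : List Bool) (hu' : u' = false :: v.dropLast) :
    ¬ (vtSynZ u' ≡ a [ZMOD (2 * k : ℕ)]) := by
  intro h
  have hne : v ≠ [] := by intro h0; simp [h0] at hlen; omega
  obtain ⟨w, b, rfl⟩ : ∃ w b, v = w ++ [b] :=
    ⟨v.dropLast, v.getLast hne, (v.dropLast_append_getLast hne).symm⟩
  have hwlen : w.length = k - 1 := by simp at hlen; omega
  have hdrop : (w ++ [b]).dropLast = w := by simp
  rw [hdrop] at hu'
  subst hu'
  -- syndromes
  have hv' : vtSynZ (w ++ [b]) = vtSynZ w + (k : ℤ) * (if b then 1 else 0) := by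
    rw [vtSynZ_concat, hwlen]
    have : ((k - 1 : ℕ) : ℤ) + 1 = (k : ℤ) := by
      have : (1:ℕ) ≤ k := by omega
      push_cast [Nat.cast_sub this]
      ring
    rw [this]
  have hu : vtSynZ (false :: w) = vtSynZ w + w.count true := by
    rw [vtSynZ_cons]; simp
  have hcv : ((w ++ [b]).count true : ℤ) = w.count true + (if b then 1 else 0) := by
    cases b <;> simp
  -- divisibility
  have hdvd : ((2 * k : ℕ) : ℤ) ∣ vtSynZ (w ++ [b]) - vtSynZ (false :: w) :=
    (h.trans hv.symm).dvd
  rw [hv', hu] at hdvd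
  have hd : ((2 * k : ℕ) : ℤ) ∣ (k : ℤ) * (if b then 1 else 0) - w.count true := by
    convert hdvd using 1; ring
  set ib : ℤ := if b then 1 else 0 with hib
  have hib01 : ib = 0 ∨ ib = 1 := by cases b <;> simp [hib]
  have hcw : ((w ++ [b]).count true : ℤ) = w.count true + ib := hcv
  have h1 : (0:ℤ) < (w ++ [b]).count true := by exact_mod_cast hw
  have h2 : ((w ++ [b]).count true : ℤ) < k := by exact_mod_cast hw'
  have hzero : (k : ℤ) * ib - w.count true = 0 := by
    apply Int.eq_zero_of_abs_lt_dvd hd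
    push_cast
    rw [abs_lt]
    rcases hib01 with h0 | h0 <;> rw [h0] at hcw ⊢ <;>
      constructor <;> push_cast at * <;> nlinarith [Int.ofNat_nonneg (w.count true)]
  rcases hib01 with h0 | h0 <;> rw [h0] at hcw hzero <;> push_cast at * <;> omega
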